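/- Let m = m(n) = ω(n² log n) and let n be odd. Then with high probability (as n → ∞ through odd integers) M ~ M(n, m) satisfies ρ(M) = ρ([n]) = m/⌊n/2⌋ = 2m/(n−1); that is, the maximum of ρ(S) over all S ⊆ [n] with |S| ≥ 2 is attained by the full vertex set S = [n]. -/

import Mathlib

open Finset Filter Asymptotics

namespace GS

variable {V : Type*}

/-- A loopless multigraph on `V`, given by a symmetric multiplicity function
with zero diagonal. -/
def IsMultigraph (G : V → V → ℕ) : Prop :=
  (∀ u v, G u v = G v u) ∧ ∀ v, G v v = 0

/-- The degree of a vertex (edges counted with multiplicity). -/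
def mdeg [Fintype V] (G : V → V → ℕ) (v : V) : ℕ := ∑ u, G v u

/-- The maximum degree `Δ(G)`. -/
def maxDeg [Fintype V] (G : V → V → ℕ) : ℕ := Finset.univ.sup (mdeg G)

/-- The number of edges (with multiplicity) with both endpoints in `S`. -/
def edgesIn [DecidableEq V] (G : V → V → ℕ) (S : Finset V) : ℕ :=
  (∑ v ∈ S, ∑ u ∈ S, G v u) / 2

/-- A proper `k`-edge-colouring: every copy of an edge gets a colour
(`(c u v).card = G u v`), symmetric, and edge copies sharing a vertex get
distinct colours. -/
def IsProperEdgeColoring [Fintype V] (G : V → V → ℕ) (k : ℕ)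
    (c : V → V → Finset (Fin k)) : Prop :=
  (∀ u v, c u v = c v u) ∧ (∀ u v, (c u v).card = G u v) ∧
    ∀ v u w, u ≠ w → Disjoint (c v u) (c v w)

/-- `G` admits a proper `k`-edge-colouring. -/
def Colorable [Fintype V] (G : V → V → ℕ) (k : ℕ) : Prop :=
  ∃ c : V → V → Finset (Fin k), IsProperEdgeColoring G k c

/-- The chromatic index `χ'(G)`. -/
noncomputable def chromIndex [Fintype V] (G : V → V → ℕ) : ℕ :=
  sInf {k | Colorable G k}

/-- `ρ(S) = e(G[S]) / ⌊|S|/2⌋`. -/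
noncomputable def rhoS [DecidableEq V] (G : V → V → ℕ) (S : Finset V) : ℝ :=
  (edgesIn G S : ℝ) / ((S.card / 2 : ℕ) : ℝ)

/-- `ρ(G)`, the maximum of `ρ(S)` over all `S` with `|S| ≥ 2`. -/
noncomputable def rho [Fintype V] [DecidableEq V] (G : V → V → ℕ) : ℝ :=
  sSup {r : ℝ | ∃ S : Finset V, 2 ≤ S.card ∧ r = rhoS G S}

/-- The maximum edge multiplicity `μ(G)`. -/
def muMax [Fintype V] [DecidableEq V] (G : V → V → ℕ) : ℕ :=
  Finset.univ.sup fun p : V × V => if p.1 = p.2 then 0 else G p.1 p.2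

/-- The minimum edge multiplicity `μ_min(G)` (over pairs of distinct vertices). -/
noncomputable def muMin (G : V → V → ℕ) : ℕ :=
  sInf {t | ∃ u v : V, u ≠ v ∧ G u v = t}

/-- The second largest degree `d₂`. -/
def secondDeg [Fintype V] [DecidableEq V] (G : V → V → ℕ) : ℕ :=
  Finset.univ.sup fun p : V × V => if p.1 = p.2 then 0 else min (mdeg G p.1) (mdeg G p.2)

/-- Unordered pairs of distinct vertices of `[n]`. -/
abbrev NDPair (n : ℕ) := {p : Sym2 (Fin n) // ¬ p.IsDiag}

/-- An outcome of the random multigraph process `M(n,m)`: a choice of one of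
the pairs for each of the `m` rounds. -/
abbrev MGOutcome (n m : ℕ) := Fin m → NDPair n

/-- The multiplicity function of the multigraph produced by an outcome. -/
def mgGraph {n m : ℕ} (ω : MGOutcome n m) : Fin n → Fin n → ℕ := fun u v =>
  (Finset.univ.filter fun i => (ω i : Sym2 (Fin n)) = s(u, v)).card

/-- The number of times the pair `p` was chosen. -/
def pairCount {n m : ℕ} (ω : MGOutcome n m) (p : NDPair n) : ℕ :=
  (Finset.univ.filter fun i => ω i = p).card

/-- The probability, under the uniform measure `M(n,m)`, of the event `P`. -/
noncomputable def mgProb (n m : ℕ) (P : MGOutcome n m → Prop) : ℝ :=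
  (Nat.card {ω : MGOutcome n m // P ω} : ℝ) / (Nat.card (MGOutcome n m) : ℝ)

end GS
namespace GS
set_option linter.unusedSectionVars false

section Tail
variable {α : Type*} [Fintype α] [DecidableEq α]

lemma sum_prod_apply (m : ℕ) (f : α → ℝ) :
    ∑ ω : Fin m → α, ∏ i, f (ω i) = (∑ x, f x) ^ m := by
  have h := Finset.prod_univ_sum (fun _ : Fin m => (univ : Finset α)) (fun _ x => f x)
  rw [Fintype.piFinset_univ] at h
  rw [← h, Finset.prod_const, Finset.card_univ, Fintype.card_fin]

lemma tail_bound (m : ℕ) (Q : Finset α) (θ : ℝ) (hθ : 0 < θ) (c : ℝ)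
    (E : (Fin m → α) → Prop) [DecidablePred E]
    (hE : ∀ ω : Fin m → α, E ω →
      Real.exp (c * Real.log θ) ≤ θ ^ (univ.filter fun i => ω i ∈ Q).card) :
    ((univ.filter E).card : ℝ) * Real.exp (c * Real.log θ)
      ≤ (θ * Q.card + ((Fintype.card α - Q.card : ℕ) : ℝ)) ^ m := by
  have key : ∀ ω : Fin m → α,
      (θ : ℝ) ^ (univ.filter fun i => ω i ∈ Q).card = ∏ i, (if ω i ∈ Q then θ else 1) := by
    intro ω
    rw [Finset.prod_ite (fun _ => θ) (fun _ => (1:ℝ)), Finset.prod_const, Finset.prod_const,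
      one_pow, mul_one]
  have hsum : ∑ ω : Fin m → α, ∏ i, (if ω i ∈ Q then θ else 1)
      = (θ * Q.card + ((Fintype.card α - Q.card : ℕ) : ℝ)) ^ m := by
    rw [sum_prod_apply m (fun x => if x ∈ Q then θ else 1)]
    congr 1
    rw [Finset.sum_ite (fun _ => θ) (fun _ => (1:ℝ)), Finset.sum_const, Finset.sum_const,
      Finset.filter_mem_eq_inter, Finset.univ_inter, Finset.filter_not, Finset.filter_mem_eq_inter,
      Finset.univ_inter, ← Finset.compl_eq_univ_sdiff, Finset.card_compl]
    ring
  calc ((univ.filter E).card : ℝ) * Real.exp (c * Real.log θ)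
      = ∑ _ω ∈ univ.filter E, Real.exp (c * Real.log θ) := by rw [Finset.sum_const, nsmul_eq_mul]
    _ ≤ ∑ ω ∈ univ.filter E, θ ^ (univ.filter fun i => ω i ∈ Q).card := by
        apply Finset.sum_le_sum
        intro ω hω
        exact hE ω (Finset.mem_filter.mp hω).2
    _ ≤ ∑ ω : Fin m → α, θ ^ (univ.filter fun i => ω i ∈ Q).card := by
        apply Finset.sum_le_sum_of_subset_of_nonneg (Finset.filter_subset _ _)
        intro ω _ _
        positivity
    _ = (θ * Q.card + ((Fintype.card α - Q.card : ℕ) : ℝ)) ^ m := by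
        rw [← hsum]; exact Finset.sum_congr rfl fun ω _ => key ω

end Tail

section Count
variable {n m : ℕ}

/-- number of rounds landing fully inside `S` -/
def cnt (ω : MGOutcome n m) (S : Finset (Fin n)) : ℕ :=
  (univ.filter fun i => ∀ x ∈ (ω i : Sym2 (Fin n)), x ∈ S).card

/-- number of rounds containing `v` -/
def dcnt (ω : MGOutcome n m) (v : Fin n) : ℕ :=
  (univ.filter fun i => v ∈ (ω i : Sym2 (Fin n))).card

lemma ite_and_eq_mul (P Q : Prop) [Decidable P] [Decidable Q] :
    (if P ∧ Q then (1:ℕ) else 0) = (if P then 1 else 0) * (if Q then 1 else 0) := by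
  by_cases hP : P <;> by_cases hQ : Q <;> simp [hP, hQ]

lemma ite_or_split (P Q : Prop) [Decidable P] [Decidable Q] (h : ¬(P ∧ Q)) :
    (if P ∨ Q then (1:ℕ) else 0) = (if P then 1 else 0) + (if Q then 1 else 0) := by
  by_cases h1 : P <;> by_cases h2 : Q <;> simp_all

lemma pair_sum (S : Finset (Fin n)) (p : Sym2 (Fin n)) (hp : ¬p.IsDiag) :
    (∑ v ∈ S, ∑ u ∈ S, if p = s(v,u) then (1:ℕ) else 0)
      = if (∀ x ∈ p, x ∈ S) then 2 else 0 := by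
  induction p using Sym2.ind with
  | _ a b =>
    rw [Sym2.mk_isDiag_iff] at hp
    have hcond : (∀ x ∈ s(a,b), x ∈ S) ↔ (a ∈ S ∧ b ∈ S) := by
      simp [Sym2.mem_iff, or_imp, forall_and]
    rw [if_congr hcond rfl rfl]
    have hsplit : ∀ v u : Fin n, (if s(a,b) = s(v,u) then (1:ℕ) else 0)
        = (if a = v then 1 else 0) * (if b = u then 1 else 0)
          + (if a = u then 1 else 0) * (if b = v then 1 else 0) := by
      intro v u
      have hex : ¬((a = v ∧ b = u) ∧ (a = u ∧ b = v)) := by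
        rintro ⟨⟨rfl, rfl⟩, ⟨rfl, -⟩⟩; exact hp rfl
      simp only [Sym2.eq_iff]
      rw [ite_or_split _ _ hex, ite_and_eq_mul, ite_and_eq_mul]
    simp_rw [hsplit, Finset.sum_add_distrib]
    have h2 : (∑ v ∈ S, ∑ u ∈ S, (if a = u then (1:ℕ) else 0) * (if b = v then 1 else 0))
        = (∑ u ∈ S, if a = u then (1:ℕ) else 0) * (∑ v ∈ S, if b = v then 1 else 0) := by
      rw [Finset.sum_comm, ← Finset.sum_mul_sum]
    rw [← Finset.sum_mul_sum, h2,
      Finset.sum_ite_eq S a (fun _ => (1:ℕ)), Finset.sum_ite_eq S b (fun _ => (1:ℕ))]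
    by_cases ha : a ∈ S <;> by_cases hb : b ∈ S <;> simp [ha, hb]

lemma mk_eq_split {a b : Fin n} (v u : Fin n) (hab : a ≠ b) :
    (if s(a,b) = s(v,u) then (1:ℕ) else 0)
      = (if a = v then 1 else 0) * (if b = u then 1 else 0)
        + (if a = u then 1 else 0) * (if b = v then 1 else 0) := by
  have hex : ¬((a = v ∧ b = u) ∧ (a = u ∧ b = v)) := by
    rintro ⟨⟨rfl, rfl⟩, ⟨rfl, -⟩⟩; exact hab rfl
  simp only [Sym2.eq_iff]
  rw [ite_or_split _ _ hex, ite_and_eq_mul, ite_and_eq_mul]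

lemma sum_mg (ω : MGOutcome n m) (S : Finset (Fin n)) :
    ∑ v ∈ S, ∑ u ∈ S, mgGraph ω v u = 2 * cnt ω S := by
  unfold mgGraph cnt
  simp_rw [Finset.card_filter]
  rw [show (∑ v ∈ S, ∑ u ∈ S, ∑ i : Fin m,
        if (↑(ω i) : Sym2 (Fin n)) = s(v,u) then (1:ℕ) else 0)
      = ∑ i : Fin m, ∑ v ∈ S, ∑ u ∈ S,
        if (↑(ω i) : Sym2 (Fin n)) = s(v,u) then (1:ℕ) else 0 from
    (Finset.sum_congr rfl fun v _ => Finset.sum_comm).trans Finset.sum_comm]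
  rw [Finset.sum_congr rfl (fun i _ => pair_sum S (ω i) (ω i).2), Finset.mul_sum]
  exact Finset.sum_congr rfl fun i _ => by by_cases h : ∀ x ∈ (ω i : Sym2 (Fin n)), x ∈ S <;> simp [h]

lemma edgesIn_cnt (ω : MGOutcome n m) (S : Finset (Fin n)) :
    edgesIn (mgGraph ω) S = cnt ω S := by
  unfold edgesIn; rw [sum_mg]; omega

lemma cnt_univ (ω : MGOutcome n m) : cnt ω univ = m := by
  unfold cnt; simp

lemma sum_eq_mk (p : Sym2 (Fin n)) (hp : ¬p.IsDiag) (v : Fin n) :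
    (∑ u : Fin n, if p = s(v,u) then (1:ℕ) else 0) = if v ∈ p then 1 else 0 := by
  induction p using Sym2.ind with
  | _ a b =>
    rw [Sym2.mk_isDiag_iff] at hp
    simp_rw [mk_eq_split _ _ hp, Finset.sum_add_distrib, ← Finset.mul_sum, ← Finset.sum_mul,
      Finset.sum_ite_eq univ a (fun _ => (1:ℕ)), Finset.sum_ite_eq univ b (fun _ => (1:ℕ))]
    simp only [Finset.mem_univ, if_true, mul_one, one_mul, Sym2.mem_iff]
    by_cases hva : a = v <;> by_cases hvb : b = v
    · exact absurd (hva.trans hvb.symm) hp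
    · subst hva; simp [hvb]
    · subst hvb; simp [hva]
    · have h1 : ¬ v = a := fun h => hva h.symm
      have h2 : ¬ v = b := fun h => hvb h.symm
      simp [hva, hvb, h1, h2]

lemma mdeg_dcnt (ω : MGOutcome n m) (v : Fin n) :
    mdeg (mgGraph ω) v = dcnt ω v := by
  unfold mdeg mgGraph dcnt
  simp_rw [Finset.card_filter]
  rw [Finset.sum_comm]
  exact Finset.sum_congr rfl fun i _ => sum_eq_mk (ω i) (ω i).2 v

lemma partition (ω : MGOutcome n m) (S : Finset (Fin n)) :
    cnt ω S + ∑ v ∈ Sᶜ, dcnt ω v = m + cnt ω Sᶜ := by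
  unfold cnt dcnt
  simp_rw [Finset.card_filter]
  rw [Finset.sum_comm (s := Sᶜ) (t := (univ : Finset (Fin m))), ← Finset.sum_add_distrib]
  have hm : (∑ i : Fin m, ((1:ℕ) + (if ∀ x ∈ (ω i : Sym2 (Fin n)), x ∈ Sᶜ then 1 else 0)))
      = m + ∑ i : Fin m, (if ∀ x ∈ (ω i : Sym2 (Fin n)), x ∈ Sᶜ then 1 else 0) := by
    rw [Finset.sum_add_distrib]; simp
  rw [← hm]
  refine Finset.sum_congr rfl fun i _ => ?_
  obtain ⟨p, hp⟩ := ω i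
  induction p using Sym2.ind with
  | _ a b =>
    rw [Sym2.mk_isDiag_iff] at hp
    have hmem : ∀ T : Finset (Fin n), (∑ v ∈ T, if v ∈ s(a,b) then (1:ℕ) else 0)
        = (if a ∈ T then 1 else 0) + (if b ∈ T then 1 else 0) := by
      intro T
      have : ∀ v : Fin n, (if v ∈ s(a,b) then (1:ℕ) else 0)
          = (if v = a then 1 else 0) + (if v = b then 1 else 0) := by
        intro v
        simp only [Sym2.mem_iff]
        refine ite_or_split _ _ ?_
        rintro ⟨rfl, rfl⟩; exact hp rfl
      simp_rw [this, Finset.sum_add_distrib,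
        Finset.sum_ite_eq' T a (fun _ => (1:ℕ)), Finset.sum_ite_eq' T b (fun _ => (1:ℕ))]
    rw [hmem]
    have hS : ∀ T : Finset (Fin n), (∀ x ∈ s(a,b), x ∈ T) ↔ (a ∈ T ∧ b ∈ T) := by
      intro T; simp [Sym2.mem_iff, or_imp, forall_and]
    rw [if_congr (hS S) rfl rfl, if_congr (hS Sᶜ) rfl rfl]
    by_cases ha : a ∈ S <;> by_cases hb : b ∈ S <;> simp [ha, hb]

lemma mgGraph_pairCount (ω : MGOutcome n m) (p : NDPair n) (u v : Fin n)
    (h : (p : Sym2 (Fin n)) = s(u,v)) : mgGraph ω u v = pairCount ω p := by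
  unfold mgGraph pairCount
  congr 1
  apply Finset.filter_congr
  intro i _
  rw [Subtype.ext_iff, h]

lemma mgGraph_diag (ω : MGOutcome n m) (v : Fin n) : mgGraph ω v v = 0 := by
  unfold mgGraph
  rw [Finset.card_eq_zero, Finset.filter_eq_empty_iff]
  intro i _
  intro h
  exact (ω i).2 (h ▸ (by simp : (s(v,v) : Sym2 (Fin n)).IsDiag))

lemma double_le (ω : MGOutcome n m) {B : ℝ} (hB : 0 ≤ B)
    (hμG : ∀ u v : Fin n, u ≠ v → (mgGraph ω u v : ℝ) ≤ B)
    (S : Finset (Fin n)) (hS : S.Nonempty) :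
    (2 * (cnt ω S) : ℝ) ≤ S.card * ((S.card : ℝ) - 1) * B := by
  have hcast : (2 * (cnt ω S) : ℝ) = ∑ v ∈ S, ∑ u ∈ S, (mgGraph ω v u : ℝ) := by
    rw_mod_cast [← sum_mg ω S]
  rw [hcast]
  have hinner : ∀ v ∈ S, ∑ u ∈ S, (mgGraph ω v u : ℝ) ≤ ((S.card : ℝ) - 1) * B := by
    intro v hv
    rw [← Finset.sum_erase_add S _ hv]
    have h0 : (mgGraph ω v v : ℝ) = 0 := by rw [mgGraph_diag]; norm_num
    rw [h0, add_zero]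
    calc ∑ u ∈ S.erase v, (mgGraph ω v u : ℝ) ≤ (S.erase v).card • B := by
          apply Finset.sum_le_card_nsmul
          intro u hu
          exact hμG v u (Ne.symm (Finset.ne_of_mem_erase hu))
      _ = ((S.card : ℝ) - 1) * B := by
          rw [Finset.card_erase_of_mem hv, nsmul_eq_mul, Nat.cast_sub (Finset.card_pos.mpr hS)]
          norm_num
  calc ∑ v ∈ S, ∑ u ∈ S, (mgGraph ω v u : ℝ) ≤ ∑ _v ∈ S, ((S.card : ℝ) - 1) * B :=
        Finset.sum_le_sum hinner
    _ = S.card * ((S.card : ℝ) - 1) * B := by rw [Finset.sum_const, nsmul_eq_mul]; ring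

set_option maxHeartbeats 1000000 in
lemma main_bound (ω : MGOutcome n m) (hn16 : 16 ≤ n)
    (hμ : ∀ p : NDPair n, (pairCount ω p : ℝ) ≤ 3*m/(n*((n:ℝ)-1)))
    (hd : ∀ v : Fin n, 8*m/(5*n) ≤ (dcnt ω v : ℝ))
    (S : Finset (Fin n)) (hS : 2 ≤ S.card) :
    ((cnt ω S : ℝ)) * ((n:ℝ) - 1) ≤ m * ((S.card : ℝ) - 1) := by
  have hn0 : (0:ℝ) < n := by positivity
  have hn16R : (16:ℝ) ≤ n := by exact_mod_cast hn16
  have hn1 : (1:ℝ) ≤ (n:ℝ) - 1 := by linarith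
  have hm0 : (0:ℝ) ≤ m := by positivity
  set B : ℝ := 3*m/(n*((n:ℝ)-1)) with hBdef
  have hB : 0 ≤ B := by positivity
  have hBmul : B * (n*((n:ℝ)-1)) = 3*m := by
    rw [hBdef]; exact div_mul_cancel₀ _ (ne_of_gt (by nlinarith))
  have hμG : ∀ u v : Fin n, u ≠ v → (mgGraph ω u v : ℝ) ≤ B := by
    intro u v huv
    have hnd : ¬ (s(u,v) : Sym2 (Fin n)).IsDiag := by
      rw [Sym2.mk_isDiag_iff]; exact huv
    rw [mgGraph_pairCount ω ⟨s(u,v), hnd⟩ u v rfl]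
    exact hμ _
  have hsn : S.card ≤ n := by
    have := Finset.card_le_univ S
    simpa using this
  have hs2 : (2:ℝ) ≤ S.card := by exact_mod_cast hS
  have hsnR : (S.card : ℝ) ≤ n := by exact_mod_cast hsn
  have hcm : (cnt ω S : ℝ) ≤ m := by
    have h1 : cnt ω S ≤ m := by
      unfold cnt
      calc (univ.filter _).card ≤ (univ : Finset (Fin m)).card := Finset.card_filter_le _ _
        _ = m := by simp
    exact_mod_cast h1
  by_cases hcase : 3 * S.card ≤ 2 * n
  · -- small S
    have hne : S.Nonempty := Finset.card_pos.mp (by omega)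
    have h2 := double_le ω hB hμG S hne
    have hnn1 : (0:ℝ) ≤ n*((n:ℝ)-1) := by nlinarith
    have key : (2*(cnt ω S:ℝ)) * (n*((n:ℝ)-1)) ≤ (S.card:ℝ)*((S.card:ℝ)-1)*(3*m) := by
      calc (2*(cnt ω S:ℝ)) * (n*((n:ℝ)-1))
          ≤ ((S.card:ℝ)*((S.card:ℝ)-1)*B) * (n*((n:ℝ)-1)) := by
            exact mul_le_mul_of_nonneg_right h2 hnn1
        _ = (S.card:ℝ)*((S.card:ℝ)-1)*(B*(n*((n:ℝ)-1))) := by ring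
        _ = (S.card:ℝ)*((S.card:ℝ)-1)*(3*m) := by rw [hBmul]
    have h3 : 3*(S.card:ℝ) ≤ 2*n := by exact_mod_cast hcase
    have hcnt0 : (0:ℝ) ≤ (cnt ω S : ℝ) := by positivity
    nlinarith [key, mul_le_mul_of_nonneg_right h3
      (mul_nonneg (by linarith : (0:ℝ) ≤ (S.card:ℝ)-1) hm0), hn0,
      mul_pos hn0 hn0]
  · -- large S
    push_neg at hcase
    rcases Nat.eq_or_lt_of_le hsn with heq | hlt
    · -- S.card = n
      rw [heq]
      nlinarith [hcm, hn1]
    · have htpos : 1 ≤ n - S.card := by omega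
      have hccard : Sᶜ.card = n - S.card := by
        rw [Finset.card_compl]; simp
      have hcne : Sᶜ.Nonempty := Finset.card_pos.mp (by omega)
      set t : ℝ := (Sᶜ.card : ℝ) with htdef
      have htR : t = (n:ℝ) - S.card := by
        rw [htdef, hccard, Nat.cast_sub hsn]
      have ht1 : (1:ℝ) ≤ t := by
        rw [htdef]; exact_mod_cast Finset.card_pos.mpr hcne
      have h3t : 3*t ≤ (n:ℝ) - 1 := by
        rw [htdef]
        have : 3 * Sᶜ.card ≤ n - 1 := by omega
        calc (3:ℝ)*(Sᶜ.card:ℝ) = ((3*Sᶜ.card : ℕ) : ℝ) := by push_cast; ring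
          _ ≤ ((n - 1 : ℕ) : ℝ) := by exact_mod_cast this
          _ ≤ (n:ℝ) - 1 := by
              rw [Nat.cast_sub (by omega)]; norm_num
      set D : ℝ := ∑ v ∈ Sᶜ, (dcnt ω v : ℝ) with hDdef
      have hD : t * (8*m/(5*n)) ≤ D := by
        rw [htdef, hDdef]
        have := Finset.card_nsmul_le_sum Sᶜ (fun v => (dcnt ω v : ℝ)) (8*m/(5*n))
          (fun v _ => hd v)
        rwa [nsmul_eq_mul] at this
      have hD2 : t*(8*(m:ℝ)) ≤ D*(5*n) := by
        have h5n : (0:ℝ) < 5*n := by positivity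
        calc t*(8*(m:ℝ)) = (t * (8*m/(5*n)))*(5*n) := by field_simp
          _ ≤ D*(5*n) := mul_le_mul_of_nonneg_right hD (le_of_lt h5n)
      have h2' := double_le ω hB hμG Sᶜ hcne
      have hnn1 : (0:ℝ) ≤ n*((n:ℝ)-1) := by nlinarith
      have key' : (2*(cnt ω Sᶜ:ℝ)) * (n*((n:ℝ)-1)) ≤ t*(t-1)*(3*m) := by
        calc (2*(cnt ω Sᶜ:ℝ)) * (n*((n:ℝ)-1))
            ≤ ((Sᶜ.card:ℝ)*((Sᶜ.card:ℝ)-1)*B) * (n*((n:ℝ)-1)) :=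
              mul_le_mul_of_nonneg_right h2' hnn1
          _ = (Sᶜ.card:ℝ)*((Sᶜ.card:ℝ)-1)*(B*(n*((n:ℝ)-1))) := by ring
          _ = t*(t-1)*(3*m) := by rw [hBmul, htdef]
      have hpartR : (cnt ω S : ℝ) + D = m + (cnt ω Sᶜ : ℝ) := by
        rw [hDdef]
        exact_mod_cast partition ω S
      have hcnt0 : (0:ℝ) ≤ (cnt ω Sᶜ : ℝ) := by positivity
      -- numeric part
      have hZ : 15*m*t*(t-1) + 10*(n:ℝ)*m*t ≤ 16*m*t*((n:ℝ)-1) := by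
        nlinarith [mul_le_mul_of_nonneg_left h3t
            (mul_nonneg (mul_nonneg (by norm_num : (0:ℝ) ≤ 5) hm0) (by linarith : (0:ℝ) ≤ t-1)),
          mul_nonneg (mul_nonneg hm0 (by linarith : (0:ℝ) ≤ t)) (by linarith : (0:ℝ) ≤ (n:ℝ)-11),
          mul_nonneg hm0 (by linarith : (0:ℝ) ≤ (n:ℝ)-1)]
      have hpartmul : ((cnt ω S : ℝ) + D)*(10*n*((n:ℝ)-1))
          = ((m:ℝ) + (cnt ω Sᶜ : ℝ))*(10*n*((n:ℝ)-1)) := by rw [hpartR]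
      have hD2mul : (t*(8*(m:ℝ)))*(2*((n:ℝ)-1)) ≤ (D*(5*n))*(2*((n:ℝ)-1)) :=
        mul_le_mul_of_nonneg_right hD2 (by linarith)
      have hfin : (10*(n:ℝ)) * ((cnt ω S : ℝ) * ((n:ℝ)-1)) ≤ (10*(n:ℝ)) * (m * ((S.card:ℝ)-1)) := by
        have hs1 : (S.card:ℝ) - 1 = (n:ℝ) - t - 1 := by rw [htR]; ring
        rw [hs1]
        linarith [key', hZ, hpartmul, hD2mul]
      have h10 : (0:ℝ) < 10*n := by positivity
      exact le_of_mul_le_mul_left hfin h10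

lemma rhoS_univ_eq (ω : MGOutcome n m) :
    rhoS (mgGraph ω) (univ : Finset (Fin n)) = (m:ℝ) / ((n/2 : ℕ) : ℝ) := by
  unfold rhoS
  rw [edgesIn_cnt, cnt_univ, Finset.card_univ, Fintype.card_fin]

lemma rhoS_le (ω : MGOutcome n m) (hodd : Odd n) (hn16 : 16 ≤ n)
    (hμ : ∀ p : NDPair n, (pairCount ω p : ℝ) ≤ 3*m/(n*((n:ℝ)-1)))
    (hd : ∀ v : Fin n, 8*m/(5*n) ≤ (dcnt ω v : ℝ))
    (S : Finset (Fin n)) (hS : 2 ≤ S.card) :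
    rhoS (mgGraph ω) S ≤ (m:ℝ) / ((n/2 : ℕ) : ℝ) := by
  have hmain := main_bound ω hn16 hμ hd S hS
  unfold rhoS
  rw [edgesIn_cnt]
  obtain ⟨k, hkodd⟩ := hodd
  have hk2 : 2*(n/2) = n - 1 := by omega
  have hkR : ((n/2 : ℕ) : ℝ) * 2 = (n:ℝ) - 1 := by
    have : ((2*(n/2) : ℕ) : ℝ) = ((n - 1 : ℕ) : ℝ) :=
      congrArg (Nat.cast : ℕ → ℝ) hk2
    push_cast [Nat.cast_sub (by omega : 1 ≤ n)] at this
    linarith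
  have hjR : (S.card : ℝ) - 1 ≤ ((S.card/2 : ℕ) : ℝ) * 2 := by
    have h1 : S.card - 1 ≤ 2*(S.card/2) := by omega
    have : ((S.card - 1 : ℕ) : ℝ) ≤ ((2*(S.card/2) : ℕ) : ℝ) := by exact_mod_cast h1
    push_cast [Nat.cast_sub (by omega : 1 ≤ S.card)] at this
    linarith
  have hkpos : (0:ℝ) < ((n/2 : ℕ) : ℝ) := by
    have : 1 ≤ n/2 := by omega
    exact_mod_cast Nat.lt_of_lt_of_le Nat.zero_lt_one this
  have hjpos : (0:ℝ) < ((S.card/2 : ℕ) : ℝ) := by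
    have : 1 ≤ S.card/2 := by omega
    exact_mod_cast Nat.lt_of_lt_of_le Nat.zero_lt_one this
  rw [div_le_div_iff₀ hjpos hkpos]
  have hm0 : (0:ℝ) ≤ m := by positivity
  nlinarith [hmain, hjR, hkR, hm0]

lemma rho_eq (ω : MGOutcome n m) (hodd : Odd n) (hn16 : 16 ≤ n)
    (hμ : ∀ p : NDPair n, (pairCount ω p : ℝ) ≤ 3*m/(n*((n:ℝ)-1)))
    (hd : ∀ v : Fin n, 8*m/(5*n) ≤ (dcnt ω v : ℝ)) :
    rho (mgGraph ω) = rhoS (mgGraph ω) (univ : Finset (Fin n)) := by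
  have hcard : 2 ≤ (univ : Finset (Fin n)).card := by
    rw [Finset.card_univ, Fintype.card_fin]; omega
  have hb : ∀ S : Finset (Fin n), 2 ≤ S.card →
      rhoS (mgGraph ω) S ≤ rhoS (mgGraph ω) (univ : Finset (Fin n)) := by
    intro S hS
    rw [rhoS_univ_eq ω]
    exact rhoS_le ω hodd hn16 hμ hd S hS
  have hmem : rhoS (mgGraph ω) (univ : Finset (Fin n)) ∈
      {r : ℝ | ∃ S : Finset (Fin n), 2 ≤ S.card ∧ r = rhoS (mgGraph ω) S} :=
    ⟨univ, hcard, rfl⟩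
  have hub : ∀ r ∈ {r : ℝ | ∃ S : Finset (Fin n), 2 ≤ S.card ∧ r = rhoS (mgGraph ω) S},
      r ≤ rhoS (mgGraph ω) (univ : Finset (Fin n)) := by
    rintro r ⟨S, hS, rfl⟩
    exact hb S hS
  unfold rho
  exact le_antisymm (csSup_le ⟨_, hmem⟩ hub) (le_csSup ⟨_, hub⟩ hmem)

lemma half_cast (hodd : Odd n) (hn16 : 16 ≤ n) :
    (m : ℝ) / ((n/2 : ℕ) : ℝ) = 2 * (m:ℝ) / ((n:ℝ) - 1) := by
  obtain ⟨k, hk⟩ := hodd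
  have hk2 : n/2 = k := by omega
  have hkpos : (0:ℝ) < k := by
    have : 1 ≤ k := by omega
    exact_mod_cast Nat.lt_of_lt_of_le Nat.zero_lt_one this
  have hnk : (n:ℝ) = 2*k+1 := by exact_mod_cast congrArg (Nat.cast : ℕ → ℝ) hk
  rw [hk2, hnk]
  field_simp
  ring

end Count

section Prob
open scoped Classical

/-- the good event -/
def good (n m : ℕ) (ω : MGOutcome n m) : Prop :=
  (∀ p : NDPair n, (pairCount ω p : ℝ) ≤ 3*m/(n*((n:ℝ)-1))) ∧
  (∀ v : Fin n, 8*(m:ℝ)/(5*n) ≤ (dcnt ω v : ℝ))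

variable {n m : ℕ}

lemma two_mul_NDPair_card (hn : 1 ≤ n) :
    2 * Fintype.card (NDPair n) = n * (n-1) := by
  have h1 : Fintype.card (NDPair n) = n.choose 2 := by
    rw [Sym2.card_subtype_not_diag, Fintype.card_fin]
  have h2 : 2 ∣ n * (n-1) := by
    rcases Nat.even_or_odd n with h | h
    · exact Dvd.dvd.mul_right h.two_dvd _
    · exact Dvd.dvd.mul_left (Nat.Odd.sub_odd h odd_one).two_dvd _
  rw [h1, Nat.choose_two_right, Nat.mul_div_cancel' h2]

lemma NDPair_card_real (hn : 1 ≤ n) :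
    (Fintype.card (NDPair n) : ℝ) * 2 = n * ((n:ℝ)-1) := by
  have h := congrArg (Nat.cast : ℕ → ℝ) (two_mul_NDPair_card hn)
  push_cast [Nat.cast_sub hn] at h
  linarith

lemma NDPair_card_pos (hn : 2 ≤ n) : 0 < Fintype.card (NDPair n) := by
  have h := two_mul_NDPair_card (by omega : 1 ≤ n)
  have hk : 0 < n*(n-1) := Nat.mul_pos (by omega) (by omega)
  omega

lemma Qv_card_ge (v : Fin n) :
    n - 1 ≤ (univ.filter fun p : NDPair n => v ∈ (p : Sym2 (Fin n))).card := by
  have hinj : Function.Injective (fun u : {u : Fin n // u ≠ v} =>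
      (⟨⟨s(v, u.1), by rw [Sym2.mk_isDiag_iff]; exact fun h => u.2 h.symm⟩,
        by simp [Sym2.mem_iff]⟩ :
        {p : NDPair n // v ∈ (p : Sym2 (Fin n))})) := by
    intro a b hab
    apply Subtype.ext
    have : (s(v, a.1) : Sym2 (Fin n)) = s(v, b.1) := by
      have := congrArg (fun x => ((x.1 : NDPair n) : Sym2 (Fin n))) hab
      simpa using this
    exact Sym2.congr_right.mp this
  have hle := Fintype.card_le_of_injective _ hinj
  have h1 : Fintype.card {u : Fin n // u ≠ v} = n - 1 := by
    rw [Fintype.card_subtype]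
    rw [show (univ.filter fun u : Fin n => u ≠ v) = univ.erase v from Finset.filter_ne' univ v,
      Finset.card_erase_of_mem (Finset.mem_univ v), Finset.card_univ, Fintype.card_fin]
  have h2 : Fintype.card {p : NDPair n // v ∈ (p : Sym2 (Fin n))}
      = (univ.filter fun p : NDPair n => v ∈ (p : Sym2 (Fin n))).card :=
    Fintype.card_subtype _
  omega

lemma pair_tail (p : NDPair n) (c : ℝ) (hc : 0 ≤ c) :
    ((univ.filter fun ω : MGOutcome n m => c < (pairCount ω p : ℝ)).card : ℝ)
      ≤ ((Fintype.card (NDPair n) : ℝ) + 1) ^ m * Real.exp (-(c * Real.log 2)) := by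
  have hN1 : 1 ≤ Fintype.card (NDPair n) := Fintype.card_pos_iff.mpr ⟨p⟩
  have htb := tail_bound m ({p} : Finset (NDPair n)) 2 (by norm_num) c
    (fun ω => c < (pairCount ω p : ℝ)) ?_
  · have hRHS : (2 * (({p} : Finset (NDPair n)).card : ℝ)
        + ((Fintype.card (NDPair n) - ({p} : Finset (NDPair n)).card : ℕ) : ℝ))
        = (Fintype.card (NDPair n) : ℝ) + 1 := by
      rw [Finset.card_singleton, Nat.cast_sub hN1]
      push_cast; ring
    rw [hRHS] at htb
    have hepos : (0:ℝ) < Real.exp (c * Real.log 2) := Real.exp_pos _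
    rw [← le_div_iff₀ hepos] at htb
    rwa [div_eq_mul_inv, ← Real.exp_neg] at htb
  · intro ω hω
    have hXc : (univ.filter fun i => ω i ∈ ({p} : Finset (NDPair n))).card = pairCount ω p := by
      unfold pairCount
      congr 1
      apply Finset.filter_congr
      intro i _
      simp
    rw [hXc]
    calc Real.exp (c * Real.log 2) ≤ Real.exp ((pairCount ω p : ℝ) * Real.log 2) := by
          rw [Real.exp_le_exp]
          exact mul_le_mul_of_nonneg_right (le_of_lt hω) (Real.log_nonneg one_le_two)
      _ = 2 ^ pairCount ω p := by
          rw [Real.exp_nat_mul, Real.exp_log (by norm_num : (0:ℝ) < 2)]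

lemma vert_tail (v : Fin n) (hn2 : 2 ≤ n) (c : ℝ) (hc : 0 ≤ c) :
    ((univ.filter fun ω : MGOutcome n m => (dcnt ω v : ℝ) < c).card : ℝ)
      ≤ ((Fintype.card (NDPair n) : ℝ) - ((n:ℝ)-1)/6) ^ m * Real.exp (c * Real.log (6/5)) := by
  set Q : Finset (NDPair n) := univ.filter fun p : NDPair n => v ∈ (p : Sym2 (Fin n)) with hQdef
  have hqN : Q.card ≤ Fintype.card (NDPair n) := by
    rw [← Finset.card_univ]; exact Finset.card_le_card (Finset.filter_subset _ _)
  have hq : n - 1 ≤ Q.card := Qv_card_ge v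
  have hqR : ((n:ℝ)-1) ≤ (Q.card : ℝ) := by
    have : ((n-1 : ℕ):ℝ) ≤ (Q.card : ℝ) := by exact_mod_cast hq
    rwa [Nat.cast_sub (by omega : 1 ≤ n), Nat.cast_one] at this
  have htb := tail_bound m Q (5/6) (by norm_num) c
    (fun ω => (dcnt ω v : ℝ) < c) ?_
  · have hbase : ((5/6 : ℝ) * Q.card + ((Fintype.card (NDPair n) - Q.card : ℕ) : ℝ))
        = (Fintype.card (NDPair n) : ℝ) - (Q.card : ℝ)/6 := by
      rw [Nat.cast_sub hqN]; ring
    rw [hbase] at htb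
    have hb2 : ((Fintype.card (NDPair n) : ℝ) - (Q.card : ℝ)/6) ^ m
        ≤ ((Fintype.card (NDPair n) : ℝ) - ((n:ℝ)-1)/6) ^ m := by
      apply pow_le_pow_left₀
      · have : (Q.card : ℝ) ≤ (Fintype.card (NDPair n) : ℝ) := by exact_mod_cast hqN
        linarith
      · linarith
    have htb2 := le_trans htb hb2
    have hepos : (0:ℝ) < Real.exp (c * Real.log (5/6)) := Real.exp_pos _
    rw [← le_div_iff₀ hepos] at htb2
    rw [div_eq_mul_inv, ← Real.exp_neg] at htb2
    have hlog : -(c * Real.log (5/6)) = c * Real.log (6/5) := by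
      rw [show (5/6 : ℝ) = (6/5)⁻¹ by norm_num, Real.log_inv]
      ring
    rwa [hlog] at htb2
  · intro ω hω
    have hXc : (univ.filter fun i => ω i ∈ Q).card = dcnt ω v := by
      unfold dcnt
      congr 1
      apply Finset.filter_congr
      intro i _
      simp [hQdef]
    rw [hXc]
    calc Real.exp (c * Real.log (5/6))
        ≤ Real.exp ((dcnt ω v : ℝ) * Real.log (5/6)) := by
          rw [Real.exp_le_exp]
          exact mul_le_mul_of_nonpos_right (le_of_lt hω)
            (Real.log_nonpos (by norm_num) (by norm_num))
      _ = (5/6 : ℝ) ^ dcnt ω v := by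
          rw [Real.exp_nat_mul, Real.exp_log (by norm_num : (0:ℝ) < 5/6)]


lemma mgProb_eq (P : MGOutcome n m → Prop) [DecidablePred P] :
    mgProb n m P = ((univ.filter P).card : ℝ) / ((Fintype.card (NDPair n) : ℝ)) ^ m := by
  unfold mgProb
  rw [Nat.card_eq_fintype_card, Nat.card_eq_fintype_card, Fintype.card_subtype,
    Fintype.card_fun, Fintype.card_fin]
  push_cast
  rfl

lemma mgProb_le_one (hn2 : 2 ≤ n) (P : MGOutcome n m → Prop) [DecidablePred P] :
    mgProb n m P ≤ 1 := by
  have hNpos : 0 < Fintype.card (NDPair n) := NDPair_card_pos hn2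
  rw [mgProb_eq]
  rw [div_le_one (by positivity)]
  calc ((univ.filter P).card : ℝ) ≤ ((univ : Finset (MGOutcome n m)).card : ℝ) := by
        exact_mod_cast Finset.card_le_card (Finset.filter_subset _ _)
    _ = ((Fintype.card (NDPair n) : ℝ)) ^ m := by
        rw [Finset.card_univ, Fintype.card_fun, Fintype.card_fin]; push_cast; rfl

lemma mgProb_mono (hn2 : 2 ≤ n) (P Q : MGOutcome n m → Prop) [DecidablePred P] [DecidablePred Q]
    (h : ∀ ω, P ω → Q ω) :
    mgProb n m P ≤ mgProb n m Q := by
  have hNpos : 0 < Fintype.card (NDPair n) := NDPair_card_pos hn2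
  rw [mgProb_eq, mgProb_eq]
  have hsub : (univ.filter P) ⊆ (univ.filter Q) := by
    intro ω hω
    rw [Finset.mem_filter] at hω ⊢
    exact ⟨hω.1, h ω hω.2⟩
  have hcard : ((univ.filter P).card : ℝ) ≤ ((univ.filter Q).card : ℝ) := by
    exact_mod_cast Finset.card_le_card hsub
  apply div_le_div_of_nonneg_right hcard ?_ |>.trans_eq rfl
  positivity

lemma mgProb_compl (hn2 : 2 ≤ n) (P : MGOutcome n m → Prop) :
    mgProb n m P = 1 - mgProb n m (fun ω => ¬ P ω) := by
  have hNpos : 0 < Fintype.card (NDPair n) := NDPair_card_pos hn2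
  have h1 : 0 < Nat.card (MGOutcome n m) := by
    rw [Nat.card_eq_fintype_card, Fintype.card_fun, Fintype.card_fin]
    positivity
  have hadd : Nat.card {ω : MGOutcome n m // P ω} + Nat.card {ω : MGOutcome n m // ¬ P ω}
      = Nat.card (MGOutcome n m) := by
    simp only [Nat.card_eq_fintype_card, Fintype.card_subtype_compl]
    have := Fintype.card_subtype_le P
    omega
  have hT : (0:ℝ) < (Nat.card (MGOutcome n m) : ℝ) := by exact_mod_cast h1
  unfold mgProb
  rw [eq_sub_iff_add_eq, ← add_div, ← Nat.cast_add, hadd, div_self (ne_of_gt hT)]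

set_option maxHeartbeats 1000000 in
lemma bad_prob_le (hodd : Odd n) (hn16 : 16 ≤ n) (hm100 : 100*(n:ℝ)^2*Real.log n ≤ (m:ℝ)) :
    mgProb n m (fun ω => ¬ good n m ω) ≤ 2/(n:ℝ) := by
  have hn1 : 1 ≤ n := by omega
  have hNpos : 0 < Fintype.card (NDPair n) := NDPair_card_pos (by omega)
  set N : ℝ := (Fintype.card (NDPair n) : ℝ) with hNdef
  have hNR : N * 2 = n*((n:ℝ)-1) := NDPair_card_real hn1
  have hN1 : (1:ℝ) ≤ N := by rw [hNdef]; exact_mod_cast hNpos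
  have hn0 : (0:ℝ) < n := by positivity
  have hn16R : (16:ℝ) ≤ n := by exact_mod_cast hn16
  have hlogn : (0:ℝ) < Real.log n := Real.log_pos (by linarith)
  have hm0 : (0:ℝ) ≤ m := Nat.cast_nonneg m
  have hnn : (0:ℝ) < n*((n:ℝ)-1) := by nlinarith
  set c1 : ℝ := 3*m/(n*((n:ℝ)-1)) with hc1def
  set c2 : ℝ := 8*(m:ℝ)/(5*n) with hc2def
  have hc1 : 0 ≤ c1 := by rw [hc1def]; exact div_nonneg (by positivity) (le_of_lt hnn)
  have hc2 : 0 ≤ c2 := by rw [hc2def]; positivity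
  set L : ℝ := (m:ℝ)/(n*((n:ℝ)-1)) with hLdef
  have hL0 : 0 ≤ L := div_nonneg hm0 (le_of_lt hnn)
  have hL100 : 100*Real.log n ≤ L := by
    rw [hLdef, le_div_iff₀ hnn]
    nlinarith [hm100, hlogn]
  rw [mgProb_eq]
  have hNm : (0:ℝ) < N^m := by positivity
  -- union bound
  have hsub : (univ.filter fun ω : MGOutcome n m => ¬ good n m ω) ⊆
      (univ.biUnion fun p : NDPair n =>
        univ.filter fun ω : MGOutcome n m => c1 < (pairCount ω p : ℝ))
      ∪ (univ.biUnion fun v : Fin n =>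
        univ.filter fun ω : MGOutcome n m => (dcnt ω v : ℝ) < c2) := by
    intro ω hω
    rw [Finset.mem_filter] at hω
    rw [Finset.mem_union]
    by_cases hA : ∀ p : NDPair n, (pairCount ω p : ℝ) ≤ c1
    · right
      have hB : ¬ ∀ v : Fin n, c2 ≤ (dcnt ω v : ℝ) := by
        intro hB
        exact hω.2 ⟨hA, hB⟩
      push_neg at hB
      obtain ⟨v, hv⟩ := hB
      exact Finset.mem_biUnion.mpr ⟨v, Finset.mem_univ _,
        Finset.mem_filter.mpr ⟨Finset.mem_univ _, hv⟩⟩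
    · left
      push_neg at hA
      obtain ⟨p, hp⟩ := hA
      exact Finset.mem_biUnion.mpr ⟨p, Finset.mem_univ _,
        Finset.mem_filter.mpr ⟨Finset.mem_univ _, hp⟩⟩
  have hnum : ((univ.filter fun ω : MGOutcome n m => ¬ good n m ω).card : ℝ)
      ≤ N * ((N + 1) ^ m * Real.exp (-(c1 * Real.log 2)))
        + (n:ℝ) * ((N - ((n:ℝ)-1)/6) ^ m * Real.exp (c2 * Real.log (6/5))) := by
    have h1 : (univ.filter fun ω : MGOutcome n m => ¬ good n m ω).card
        ≤ (∑ p : NDPair n,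
            (univ.filter fun ω : MGOutcome n m => c1 < (pairCount ω p : ℝ)).card)
          + ∑ v : Fin n,
            (univ.filter fun ω : MGOutcome n m => (dcnt ω v : ℝ) < c2).card := by
      refine le_trans (Finset.card_le_card hsub) (le_trans (Finset.card_union_le _ _) ?_)
      exact add_le_add (Finset.card_biUnion_le) (Finset.card_biUnion_le)
    have h1R : ((univ.filter fun ω : MGOutcome n m => ¬ good n m ω).card : ℝ)
        ≤ (∑ p : NDPair n,
            ((univ.filter fun ω : MGOutcome n m => c1 < (pairCount ω p : ℝ)).card : ℝ))
          + ∑ v : Fin n,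
            ((univ.filter fun ω : MGOutcome n m => (dcnt ω v : ℝ) < c2).card : ℝ) := by
      exact_mod_cast h1
    refine le_trans h1R (add_le_add ?_ ?_)
    · calc (∑ p : NDPair n,
            ((univ.filter fun ω : MGOutcome n m => c1 < (pairCount ω p : ℝ)).card : ℝ))
          ≤ ∑ _p : NDPair n, ((N + 1) ^ m * Real.exp (-(c1 * Real.log 2))) :=
            Finset.sum_le_sum fun p _ => pair_tail p c1 hc1
        _ = N * ((N + 1) ^ m * Real.exp (-(c1 * Real.log 2))) := by
            rw [Finset.sum_const, nsmul_eq_mul, Finset.card_univ, hNdef]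
    · calc (∑ v : Fin n,
            ((univ.filter fun ω : MGOutcome n m => (dcnt ω v : ℝ) < c2).card : ℝ))
          ≤ ∑ _v : Fin n, ((N - ((n:ℝ)-1)/6) ^ m * Real.exp (c2 * Real.log (6/5))) :=
            Finset.sum_le_sum fun v _ => vert_tail v (by omega) c2 hc2
        _ = (n:ℝ) * ((N - ((n:ℝ)-1)/6) ^ m * Real.exp (c2 * Real.log (6/5))) := by
            rw [Finset.sum_const, nsmul_eq_mul, Finset.card_univ, Fintype.card_fin]
  -- part A bound
  have hN0 : (0:ℝ) < N := by linarith
  have hApart : N * ((N + 1) ^ m * Real.exp (-(c1 * Real.log 2))) / N^m ≤ 1/(n:ℝ)^2 := by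
    have hratio : (N+1)/N ≤ Real.exp (1/N) := by
      have h := Real.add_one_le_exp (1/N)
      have h2 : (N+1)/N = 1/N + 1 := by field_simp; ring
      rw [h2]
      exact h
    have hpow : ((N+1)/N)^m ≤ Real.exp ((m:ℝ) * (1/N)) := by
      calc ((N+1)/N)^m ≤ Real.exp (1/N) ^ m := pow_le_pow_left₀ (by positivity) hratio m
        _ = Real.exp ((m:ℝ) * (1/N)) := (Real.exp_nat_mul _ m).symm
    have hmN : (m:ℝ) * (1/N) = 2*L := by
      rw [hLdef, ← hNR]
      field_simp
    have hc1L : c1 = 3*L := by rw [hc1def, hLdef]; ring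
    have hE1 : (m:ℝ)*(1/N) - c1*Real.log 2 ≤ -(4*Real.log n) := by
      rw [hmN, hc1L]
      nlinarith [Real.log_two_gt_d9, hL100, hlogn, hL0,
        mul_le_mul_of_nonneg_right hL100
          (show (0:ℝ) ≤ 3*Real.log 2 - 2 by nlinarith [Real.log_two_gt_d9])]
    have hNn2 : N ≤ (n:ℝ)^2 := by nlinarith [hNR]
    have h4 : Real.exp (-(4*Real.log n)) = ((n:ℝ)^4)⁻¹ := by
      rw [Real.exp_neg, show (4:ℝ)*Real.log n = ((4:ℕ):ℝ)*Real.log n by norm_num,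
        Real.exp_nat_mul, Real.exp_log hn0]
    calc N * ((N + 1) ^ m * Real.exp (-(c1 * Real.log 2))) / N^m
        = N * (((N+1)/N)^m * Real.exp (-(c1 * Real.log 2))) := by
          rw [div_pow]; ring
      _ ≤ N * (Real.exp ((m:ℝ) * (1/N)) * Real.exp (-(c1 * Real.log 2))) := by
          gcongr
      _ = N * Real.exp ((m:ℝ)*(1/N) - c1*Real.log 2) := by
          rw [← Real.exp_add]; ring_nf
      _ ≤ (n:ℝ)^2 * Real.exp (-(4*Real.log n)) :=
          mul_le_mul hNn2 (Real.exp_le_exp.mpr hE1) (Real.exp_pos _).le (by positivity)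
      _ = (n:ℝ)^2 * ((n:ℝ)^4)⁻¹ := by rw [h4]
      _ = 1/(n:ℝ)^2 := by field_simp
  -- part B bound
  have hBpart : (n:ℝ) * ((N - ((n:ℝ)-1)/6) ^ m * Real.exp (c2 * Real.log (6/5))) / N^m
      ≤ 1/(n:ℝ) := by
    have hyval : (N - ((n:ℝ)-1)/6)/N = 1 - 1/(3*n) := by
      rw [sub_div, div_self (ne_of_gt hN0)]
      congr 1
      rw [div_div, div_eq_div_iff (by positivity) (by positivity)]
      nlinarith [hNR]
    have h1x : 1 - 1/(3*(n:ℝ)) ≤ Real.exp (-(1/(3*n))) := by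
      have h := Real.add_one_le_exp (-(1/(3*(n:ℝ))))
      linarith
    have h0y : (0:ℝ) ≤ 1 - 1/(3*(n:ℝ)) := by
      have : 1/(3*(n:ℝ)) ≤ 1 := by
        rw [div_le_one (by positivity)]
        linarith
      linarith
    have hypow : ((N - ((n:ℝ)-1)/6)/N)^m ≤ Real.exp (-((m:ℝ)/(3*n))) := by
      rw [hyval]
      calc (1 - 1/(3*(n:ℝ)))^m ≤ Real.exp (-(1/(3*(n:ℝ))))^m :=
            pow_le_pow_left₀ h0y h1x m
        _ = Real.exp ((m:ℝ) * (-(1/(3*(n:ℝ))))) := (Real.exp_nat_mul _ m).symm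
        _ = Real.exp (-((m:ℝ)/(3*n))) := by ring_nf
    have hlog65 : Real.log (6/5) ≤ 1/5 := by
      have := Real.log_le_sub_one_of_pos (show (0:ℝ) < 6/5 by norm_num)
      linarith
    have hexpc2 : Real.exp (c2 * Real.log (6/5)) ≤ Real.exp (c2/5) := by
      rw [Real.exp_le_exp]
      calc c2 * Real.log (6/5) ≤ c2 * (1/5) := mul_le_mul_of_nonneg_left hlog65 hc2
        _ = c2/5 := by ring
    have hE2 : -((m:ℝ)/(3*n)) + c2/5 ≤ -(2*Real.log n) := by
      rw [hc2def]
      have harith : -((m:ℝ)/(3*n)) + (8*(m:ℝ)/(5*n))/5 = -((m:ℝ)/(75*n)) := by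
        field_simp
        ring
      rw [harith, neg_le_neg_iff, le_div_iff₀ (by positivity : (0:ℝ) < 75*n)]
      nlinarith [mul_le_mul_of_nonneg_left
        (show (150:ℝ)*n ≤ 100*(n:ℝ)^2 by nlinarith) hlogn.le]
    calc (n:ℝ) * ((N - ((n:ℝ)-1)/6) ^ m * Real.exp (c2 * Real.log (6/5))) / N^m
        = (n:ℝ) * (((N - ((n:ℝ)-1)/6)/N)^m * Real.exp (c2 * Real.log (6/5))) := by
          rw [div_pow]; ring
      _ ≤ (n:ℝ) * (Real.exp (-((m:ℝ)/(3*n))) * Real.exp (c2/5)) := by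
          apply mul_le_mul_of_nonneg_left ?_ hn0.le
          apply mul_le_mul hypow hexpc2 (Real.exp_pos _).le (Real.exp_pos _).le
      _ = (n:ℝ) * Real.exp (-((m:ℝ)/(3*n)) + c2/5) := by rw [← Real.exp_add]
      _ ≤ (n:ℝ) * Real.exp (-(2*Real.log n)) :=
          mul_le_mul_of_nonneg_left (Real.exp_le_exp.mpr hE2) hn0.le
      _ = (n:ℝ) * (((n:ℝ)^2)⁻¹) := by
          rw [Real.exp_neg, show (2:ℝ)*Real.log n = ((2:ℕ):ℝ)*Real.log n by norm_num,
            Real.exp_nat_mul, Real.exp_log hn0]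
      _ ≤ 1/(n:ℝ) := le_of_eq (by field_simp)
  calc ((univ.filter fun ω : MGOutcome n m => ¬ good n m ω).card : ℝ) / N^m
      ≤ (N * ((N + 1) ^ m * Real.exp (-(c1 * Real.log 2)))
          + (n:ℝ) * ((N - ((n:ℝ)-1)/6) ^ m * Real.exp (c2 * Real.log (6/5)))) / N^m := by
        gcongr
    _ = N * ((N + 1) ^ m * Real.exp (-(c1 * Real.log 2))) / N^m
          + (n:ℝ) * ((N - ((n:ℝ)-1)/6) ^ m * Real.exp (c2 * Real.log (6/5))) / N^m := by
        rw [add_div]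
    _ ≤ 1/(n:ℝ)^2 + 1/(n:ℝ) := add_le_add hApart hBpart
    _ ≤ 2/(n:ℝ) := by
        rw [div_add_div _ _ (by positivity) (by positivity), div_le_div_iff₀ (by positivity) hn0]
        nlinarith

lemma good_prob (hodd : Odd n) (hn16 : 16 ≤ n) (hm100 : 100*(n:ℝ)^2*Real.log n ≤ (m:ℝ)) :
    1 - 2/(n:ℝ) ≤ mgProb n m (good n m) := by
  rw [mgProb_compl (by omega) (good n m)]
  have := bad_prob_le hodd hn16 hm100
  linarith

end Prob
end GS


open GS Filter

/-- **Claim.** Let `m = ω(n² log n)` and `n` odd. Then w.h.p. (through odd `n`)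
`M ~ M(n, m)` satisfies `ρ(M) = ρ([n]) = m / ⌊n/2⌋ = 2m/(n-1)`: the maximum of
`ρ(S)` is attained at the full vertex set. -/
theorem random_multigraph_rho_full (m : ℕ → ℕ)
    (hm : Tendsto (fun n : ℕ => (m n : ℝ) / ((n : ℝ) ^ 2 * Real.log n))
      (atTop ⊓ Filter.principal {n : ℕ | Odd n}) atTop) :
    Tendsto (fun n => mgProb n (m n) (fun ω =>
        rho (mgGraph ω) = rhoS (mgGraph ω) Finset.univ ∧
        rhoS (mgGraph ω) Finset.univ = (m n : ℝ) / ((n / 2 : ℕ) : ℝ) ∧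
        (m n : ℝ) / ((n / 2 : ℕ) : ℝ) = 2 * (m n : ℝ) / ((n : ℝ) - 1)))
      (atTop ⊓ Filter.principal {n : ℕ | Odd n}) (nhds 1) := by
  classical
  have hodd : ∀ᶠ n : ℕ in atTop ⊓ Filter.principal {n : ℕ | Odd n}, Odd n := by
    rw [eventually_inf_principal]
    exact Eventually.of_forall fun n hn => hn
  have h16 : ∀ᶠ n : ℕ in atTop ⊓ Filter.principal {n : ℕ | Odd n}, 16 ≤ n :=
    (eventually_ge_atTop 16).filter_mono inf_le_left
  have h100 := hm.eventually_ge_atTop 100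
  have key : ∀ᶠ n : ℕ in atTop ⊓ Filter.principal {n : ℕ | Odd n},
      100*(n:ℝ)^2*Real.log n ≤ (m n : ℝ) := by
    filter_upwards [h16, h100] with n h1 h2
    have hn1R : (1:ℝ) < n := by exact_mod_cast (by omega : 1 < n)
    have hpos : 0 < (n:ℝ)^2*Real.log n := mul_pos (by positivity) (Real.log_pos hn1R)
    rw [le_div_iff₀ hpos] at h2
    linarith
  apply tendsto_of_tendsto_of_tendsto_of_le_of_le'
    (g := fun n : ℕ => 1 - 2/(n:ℝ)) (h := fun _ : ℕ => (1:ℝ))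
  · have h0 := tendsto_const_div_atTop_nhds_zero_nat (2:ℝ)
    have h1 : Tendsto (fun n : ℕ => 1 - 2/(n:ℝ)) atTop (nhds (1 - 0)) :=
      tendsto_const_nhds.sub h0
    rw [sub_zero] at h1
    exact h1.mono_left inf_le_left
  · exact tendsto_const_nhds
  · filter_upwards [hodd, h16, key] with n h1 h2 h3
    refine le_trans (good_prob h1 h2 h3) (mgProb_mono (by omega) _ _ ?_)
    intro ω hg
    exact ⟨rho_eq ω h1 h2 hg.1 hg.2, rhoS_univ_eq ω, half_cast h1 h2⟩
  · filter_upwards [h16] with n h2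
    exact mgProb_le_one (by omega) _
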